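/- Let p be a prime, m ≥ 1 and n ≥ 0 natural numbers, and let Λ = ℤ_p⟦T⟧. Then the quotient ring Λ/(p^m, (1+T)^{p^n} − 1) of Λ by the ideal generated by p^m and (1+T)^{p^n} − 1 is finite of cardinality p^{m·p^n}. -/

import Mathlib

open Polynomial PowerSeries

lemma aeval_trunc_coe {R S : Type*} [CommRing R] [CommRing S] [Algebra R S] {x : S} {N : ℕ}
    (hx : x ^ N = 0) (Q : R[X]) :
    aeval x (PowerSeries.trunc N (Q : PowerSeries R)) = aeval x Q := by
  have h : (X : R[X]) ^ N ∣ Q - PowerSeries.trunc N (Q : PowerSeries R) := by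
    rw [Polynomial.X_pow_dvd_iff]
    intro d hd
    simp [PowerSeries.coeff_trunc, hd, Polynomial.coeff_coe]
  obtain ⟨s, hs⟩ := h
  have := congrArg (aeval x) hs
  simp only [map_sub, map_mul, map_pow, aeval_X, hx, zero_mul] at this
  exact (sub_eq_zero.mp this).symm

noncomputable def truncEval {R S : Type*} [CommRing R] [CommRing S] [Algebra R S] (x : S) (N : ℕ)
    (hx : x ^ N = 0) : PowerSeries R →+* S where
  toFun F := aeval x (PowerSeries.trunc N F)
  map_one' := by
    show aeval x (PowerSeries.trunc N (1 : PowerSeries R)) = 1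
    rw [show (1 : PowerSeries R) = ((1 : R[X]) : PowerSeries R) by push_cast; rfl,
      aeval_trunc_coe hx]; simp
  map_mul' F G := by
    show aeval x (PowerSeries.trunc N (F * G)) = _
    rw [← PowerSeries.trunc_trunc_mul_trunc,
      show ((PowerSeries.trunc N F : R[X]) : PowerSeries R) * (PowerSeries.trunc N G : R[X]) =
        (((PowerSeries.trunc N F * PowerSeries.trunc N G : R[X])) : PowerSeries R) by push_cast; rfl,
      aeval_trunc_coe hx]
    simp
  map_zero' := by simp
  map_add' F G := by simp [map_add]

lemma truncEval_apply {R S : Type*} [CommRing R] [CommRing S] [Algebra R S] (x : S) (N : ℕ)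
    (hx : x ^ N = 0) (F : PowerSeries R) :
    truncEval x N hx F = aeval x (PowerSeries.trunc N F) := rfl

lemma truncEval_coe {R S : Type*} [CommRing R] [CommRing S] [Algebra R S] (x : S) (N : ℕ)
    (hx : x ^ N = 0) (Q : R[X]) :
    truncEval x N hx (Q : PowerSeries R) = aeval x Q := aeval_trunc_coe hx Q

lemma powerSeries_map_poly_coe {R S : Type*} [CommRing R] [CommRing S] (σ : R →+* S)
    (q : R[X]) : PowerSeries.map σ (q : PowerSeries R) = ((q.map σ : S[X]) : PowerSeries S) := by
  ext i
  simp [PowerSeries.coeff_map, Polynomial.coeff_coe, Polynomial.coeff_map]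

lemma f'_dvd (p k : ℕ) [Fact p.Prime] {R : Type*} [CommRing R] :
    (Polynomial.C (p : R)) ∣ ((1 + Polynomial.X : R[X])^(p^k) - 1 - Polynomial.X^(p^k)) := by
  rw [Polynomial.C_dvd_iff_dvd_coeff]
  intro i
  have hco : ((1 + Polynomial.X : R[X])^(p^k)).coeff i = ((p^k).choose i : R) := by
    rw [add_comm]; exact Polynomial.coeff_X_add_one_pow R (p^k) i
  simp only [coeff_sub, hco, Polynomial.coeff_one, Polynomial.coeff_X_pow]
  have hpk : p ^ k ≠ 0 := pow_ne_zero _ (Fact.out (p := p.Prime)).ne_zero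
  rcases eq_or_ne i 0 with rfl | hi0
  · rcases eq_or_ne (p^k) 0 with h | h
    · exact absurd h hpk
    · simp [Ne.symm (Nat.pos_of_ne_zero h).ne']
  · rcases eq_or_ne i (p^k) with rfl | hipk
    · simp [Nat.choose_self, hi0, (Fact.out (p := p.Prime)).ne_zero]
    · obtain ⟨c, hc⟩ := (Fact.out (p := p.Prime)).dvd_choose_pow hi0 hipk
      refine ⟨(c : R), ?_⟩
      simp only [hi0, hipk, if_neg, if_false]
      push_cast [hc]
      ring

/-- For a prime `p`, `m ≥ 1` and `n ≥ 0`, the quotient of `Λ = ℤ_p⟦T⟧` by the ideal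
generated by `p^m` and `(1+T)^(p^n) - 1` is finite of cardinality `p^(m·p^n)`. -/
theorem iwasawa_quotient_card (p : ℕ) [Fact p.Prime] (m n : ℕ) (hm : 1 ≤ m) :
    Finite (PowerSeries ℤ_[p] ⧸
        Ideal.span ({(p : PowerSeries ℤ_[p]) ^ m,
          (1 + PowerSeries.X) ^ p ^ n - 1} : Set (PowerSeries ℤ_[p]))) ∧
    Nat.card (PowerSeries ℤ_[p] ⧸
        Ideal.span ({(p : PowerSeries ℤ_[p]) ^ m,
          (1 + PowerSeries.X) ^ p ^ n - 1} : Set (PowerSeries ℤ_[p]))) = p ^ (m * p ^ n) := by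
  classical
  have hp : p.Prime := Fact.out
  set R := ZMod (p ^ m) with hR
  haveI : NeZero (p ^ m) := ⟨pow_ne_zero _ hp.ne_zero⟩
  set f' : R[X] := (1 + Polynomial.X) ^ (p ^ n) - 1 with hf'
  set A := AdjoinRoot f' with hA
  set r : A := AdjoinRoot.root f' with hr
  -- p^m = 0 in R
  have hp0 : ((p : R)) ^ m = 0 := by
    rw [← Nat.cast_pow, ZMod.natCast_self]
  -- divisibility structure
  obtain ⟨g, hg⟩ := f'_dvd p n (R := R)
  -- r ^ (p^n) = - mk (C p * g)
  have hroot : r ^ (p ^ n) = - AdjoinRoot.mk f' (Polynomial.C (p : R) * g) := by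
    have hX : (Polynomial.X : R[X]) ^ (p ^ n) = f' - Polynomial.C (p : R) * g := by
      rw [← hg]; ring
    rw [hr, ← AdjoinRoot.mk_X, ← map_pow, hX, map_sub, AdjoinRoot.mk_self, zero_sub]
  set N := p ^ n * m with hN
  have hrN : r ^ N = 0 := by
    rw [hN, pow_mul, hroot, neg_pow, ← map_pow, mul_pow, ← Polynomial.C_pow, hp0, map_zero, zero_mul,
      map_zero, mul_zero]
  -- f' divides X^N
  have hXN : f' ∣ (Polynomial.X : R[X]) ^ N := by
    rw [← AdjoinRoot.mk_eq_zero, map_pow, AdjoinRoot.mk_X, ← hr, hrN]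
  haveI : Fact (1 < p ^ m) := ⟨Nat.one_lt_pow (by omega) hp.one_lt⟩
  -- monic and degree
  have h1 : ((Polynomial.X + Polynomial.C (1 : R)) ^ (p ^ n)).Monic := (monic_X_add_C 1).pow _
  have hdeg1 : ((Polynomial.X + Polynomial.C (1 : R)) ^ (p ^ n)).natDegree = p ^ n := by
    rw [Monic.natDegree_pow (monic_X_add_C 1), natDegree_X_add_C, mul_one]
  have hfeq : f' = (Polynomial.X + Polynomial.C (1 : R)) ^ (p ^ n) - Polynomial.C 1 := by
    rw [hf', Polynomial.C_1]; ring
  have hdegree1 : ((Polynomial.X + Polynomial.C (1 : R)) ^ (p ^ n)).degree = ((p ^ n : ℕ) : WithBot ℕ) := by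
    rw [degree_eq_natDegree h1.ne_zero, hdeg1]
  have hmonic : f'.Monic := by
    rw [hfeq]
    apply h1.sub_of_left
    rw [hdegree1]
    apply lt_of_le_of_lt (Polynomial.degree_C_le)
    exact_mod_cast Nat.pos_of_ne_zero (pow_ne_zero _ hp.ne_zero)
  have hdegf : f'.natDegree = p ^ n := by
    rw [hfeq, natDegree_sub_C, hdeg1]
  -- the evaluation homomorphism
  set σ : ℤ_[p] →+* R := PadicInt.toZModPow m with hσ
  set φ : PowerSeries ℤ_[p] →+* A := (truncEval r N hrN).comp (PowerSeries.map σ) with hφ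
  have hσsurj : Function.Surjective σ := by
    intro a
    obtain ⟨k, hk⟩ := ZMod.intCast_surjective a
    exact ⟨(k : ℤ_[p]), by rw [hσ, map_intCast]; exact hk⟩
  have hφsurj : Function.Surjective φ := by
    intro a
    obtain ⟨q, rfl⟩ := AdjoinRoot.mk_surjective (g := f') a
    obtain ⟨q', hq'⟩ := Polynomial.map_surjective σ hσsurj q
    refine ⟨(q' : PowerSeries ℤ_[p]), ?_⟩
    rw [hφ, RingHom.comp_apply, powerSeries_map_poly_coe, hq', truncEval_coe,
      AdjoinRoot.aeval_eq]
  -- the two generators are in the kernel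
  have hmapf : PowerSeries.map σ ((1 + PowerSeries.X) ^ (p ^ n) - 1) = (f' : PowerSeries R) := by
    rw [hf']
    push_cast [Polynomial.coe_sub, Polynomial.coe_pow, Polynomial.coe_add, Polynomial.coe_one,
      Polynomial.coe_X]
    simp [map_sub, map_pow, map_add, map_one, PowerSeries.map_X]
  have hpA : ((p : A)) ^ m = 0 := by
    rw [← Nat.cast_pow, ← map_natCast (algebraMap R A) (p ^ m), ZMod.natCast_self, map_zero]
  have hkerp : φ ((p : PowerSeries ℤ_[p]) ^ m) = 0 := by
    rw [map_pow, map_natCast, hpA]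
  have hkerf : φ ((1 + PowerSeries.X) ^ (p ^ n) - 1) = 0 := by
    rw [hφ, RingHom.comp_apply, hmapf, truncEval_coe, AdjoinRoot.aeval_eq,
      AdjoinRoot.mk_self]
  -- kernel equality
  have hker : RingHom.ker φ =
      Ideal.span {(p : PowerSeries ℤ_[p]) ^ m, (1 + PowerSeries.X) ^ p ^ n - 1} := by
    apply le_antisymm
    · intro F hF
      rw [RingHom.mem_ker] at hF
      have h1 : f' ∣ PowerSeries.trunc N (PowerSeries.map σ F) := by
        rw [← AdjoinRoot.mk_eq_zero, ← AdjoinRoot.aeval_eq]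
        exact hF
      have hXdvd : (f' : PowerSeries R) ∣ (PowerSeries.X : PowerSeries R) ^ N := by
        have := map_dvd (Polynomial.coeToPowerSeries.ringHom) hXN
        simpa [Polynomial.coeToPowerSeries.ringHom_apply, Polynomial.coe_pow,
          Polynomial.coe_X] using this
      have h2 : (f' : PowerSeries R) ∣ PowerSeries.map σ F := by
        have hdiff : (PowerSeries.X : PowerSeries R) ^ N ∣
            (PowerSeries.map σ F - ↑(PowerSeries.trunc N (PowerSeries.map σ F))) := by
          rw [PowerSeries.X_pow_dvd_iff]
          intro i hi
          rw [map_sub, PowerSeries.coeff_coe_trunc_of_lt hi, sub_self]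
        have hco : (f' : PowerSeries R) ∣ ↑(PowerSeries.trunc N (PowerSeries.map σ F)) := by
          have := map_dvd (Polynomial.coeToPowerSeries.ringHom) h1
          simpa [Polynomial.coeToPowerSeries.ringHom_apply] using this
        have := dvd_add hco (hXdvd.trans hdiff)
        simpa using this
      obtain ⟨H, hH⟩ := h2
      set Ht : PowerSeries ℤ_[p] :=
        PowerSeries.mk fun i => Classical.choose (hσsurj (PowerSeries.coeff i H)) with hHt
      have hmapHt : PowerSeries.map σ Ht = H := by
        ext i
        rw [PowerSeries.coeff_map, hHt, PowerSeries.coeff_mk]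
        exact Classical.choose_spec (hσsurj (PowerSeries.coeff i H))
      set D : PowerSeries ℤ_[p] := F - ((1 + PowerSeries.X) ^ p ^ n - 1) * Ht with hD
      have hmapD : PowerSeries.map σ D = 0 := by
        rw [hD, map_sub, map_mul, hmapf, hmapHt, ← hH, sub_self]
      have hdvdD : ∀ i, (p : ℤ_[p]) ^ m ∣ PowerSeries.coeff i D := by
        intro i
        have h0 : σ (PowerSeries.coeff i D) = 0 := by
          rw [← PowerSeries.coeff_map, hmapD, map_zero]
        rw [← Ideal.mem_span_singleton, ← PadicInt.ker_toZModPow m, RingHom.mem_ker]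
        exact h0
      set G : PowerSeries ℤ_[p] :=
        PowerSeries.mk fun i => Classical.choose (hdvdD i) with hG
      have hGspec : (p : PowerSeries ℤ_[p]) ^ m * G = D := by
        have hpC : (p : PowerSeries ℤ_[p]) ^ m
            = PowerSeries.C ((p : ℤ_[p]) ^ m) := by
          rw [map_pow, map_natCast]
        ext i
        rw [hpC, PowerSeries.coeff_C_mul, hG, PowerSeries.coeff_mk]
        exact (Classical.choose_spec (hdvdD i)).symm
      rw [Ideal.mem_span_pair]
      refine ⟨G, Ht, ?_⟩
      have : D = F - ((1 + PowerSeries.X) ^ p ^ n - 1) * Ht := hD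
      linear_combination hGspec + this
    · rw [Ideal.span_le]
      rintro x hx
      simp only [Set.mem_insert_iff, Set.mem_singleton_iff] at hx
      rcases hx with rfl | rfl
      · rw [SetLike.mem_coe, RingHom.mem_ker]; exact hkerp
      · rw [SetLike.mem_coe, RingHom.mem_ker]; exact hkerf
  -- the ring equivalence
  let e : (PowerSeries ℤ_[p] ⧸
      Ideal.span ({(p : PowerSeries ℤ_[p]) ^ m,
        (1 + PowerSeries.X) ^ p ^ n - 1} : Set (PowerSeries ℤ_[p]))) ≃+* A :=
    (Ideal.quotEquivOfEq hker.symm).trans (RingHom.quotientKerEquivOfSurjective hφsurj)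
  -- cardinality of A
  let pb := AdjoinRoot.powerBasis' hmonic
  haveI : Fintype A := Module.fintypeOfFintype pb.basis
  have hcA : Fintype.card A = (p ^ m) ^ (p ^ n) := by
    rw [Module.card_fintype pb.basis, ZMod.card, Fintype.card_fin]
    congr 1
  constructor
  · exact Finite.of_equiv A e.toEquiv.symm
  · rw [Nat.card_congr e.toEquiv, Nat.card_eq_fintype_card, hcA, ← pow_mul]
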